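/- The linked-triangle graph X_∞ is distance-regular with intersection array b_0 = 4, b_i = 2 for i ≥ 1, and c_i = 1 for i ≥ 1. Moreover its spheres satisfy |Γ_i(v_0)| = 2^{i+1} for all i ≥ 1 and any vertex v_0. -/

import Mathlib

/-- Vertices of the linked-triangle graph: nonempty finite words over a
three-letter alphabet in which every two consecutive letters differ. -/
def LTVertex : Type :=
  {l : List (Fin 3) // l ≠ [] ∧ l.Chain' (· ≠ ·)}

/-- The linked-triangle graph: two words are adjacent iff one is obtained from
the other by appending one letter, or they have the same length and agree
except in the last letter. -/
def LTGraph : SimpleGraph LTVertex where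
  Adj v w := v ≠ w ∧
    ((v.1 <+: w.1 ∧ w.1.length = v.1.length + 1) ∨
     (w.1 <+: v.1 ∧ v.1.length = w.1.length + 1) ∨
     (v.1.length = w.1.length ∧ v.1.dropLast = w.1.dropLast))
  symm := by
    constructor
    rintro v w ⟨hne, h⟩
    refine ⟨hne.symm, ?_⟩
    rcases h with h | h | ⟨h1, h2⟩
    · exact Or.inr (Or.inl h)
    · exact Or.inl h
    · exact Or.inr (Or.inr ⟨h1.symm, h2.symm⟩)
  loopless := by constructor; rintro v ⟨hne, -⟩; exact hne rfl

namespace LT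

abbrev L := List (Fin 3)

def D : L → L → ℕ
  | [], m => m.length
  | _::s, [] => s.length + 1
  | a::s, b::t => if a = b then D s t else s.length + t.length + 1

@[simp] lemma D_nil_left (m : L) : D [] m = m.length := by cases m <;> rfl
@[simp] lemma D_nil_right (l : L) : D l [] = l.length := by cases l <;> rfl
@[simp] lemma D_cons_cons (a b : Fin 3) (s t : L) :
    D (a::s) (b::t) = if a = b then D s t else s.length + t.length + 1 := rfl

@[simp] lemma D_self (l : L) : D l l = 0 := by
  induction l with
  | nil => rfl
  | cons a s ih => simp [ih]

lemma D_comm (l m : L) : D l m = D m l := by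
  induction l generalizing m with
  | nil => cases m <;> simp
  | cons a s ih =>
    cases m with
    | nil => simp
    | cons b t =>
      by_cases h : a = b
      · subst h; simp [ih]
      · rw [D_cons_cons, D_cons_cons, if_neg h, if_neg (Ne.symm h)]; omega

lemma D_eq_zero_iff {l m : L} : D l m = 0 ↔ l = m := by
  induction l generalizing m with
  | nil => cases m <;> simp
  | cons a s ih =>
    cases m with
    | nil => simp
    | cons b t =>
      by_cases h : a = b
      · subst h; simp [ih]
      · simp [h]

lemma D_append_left (u s t : L) : D (u ++ s) (u ++ t) = D s t := by
  induction u with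
  | nil => simp
  | cons a u ih => simpa using ih

lemma D_prefix (u t : L) : D u (u ++ t) = t.length := by
  have := D_append_left u [] t; simpa using this

lemma D_concat_le (l : L) (x : Fin 3) :
    ∀ m : L, D l (m ++ [x]) ≤ D l m + 1 ∧ D l m ≤ D l (m ++ [x]) + 1 := by
  induction l with
  | nil => intro m; simp; omega
  | cons a s ih =>
    intro m
    cases m with
    | nil =>
      simp only [List.nil_append, D_cons_cons, D_nil_right]
      split <;> simp <;> omega
    | cons b t =>
      rcases ih t with ⟨h1, h2⟩
      simp only [List.cons_append, D_cons_cons]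
      split
      · constructor <;> omega
      · simp only [List.length_append, List.length_cons, List.length_nil]
        omega

lemma D_sib_le (l : L) (y y' : Fin 3) :
    ∀ r : L, D l (r ++ [y']) ≤ D l (r ++ [y]) + 1 := by
  induction l with
  | nil => intro r; simp
  | cons a s ih =>
    intro r
    cases r with
    | nil =>
      simp only [List.nil_append, D_cons_cons, D_nil_right]
      split <;> split <;> simp_all <;> omega
    | cons b r' =>
      have := ih r'
      simp only [List.cons_append, D_cons_cons]
      split
      · exact this
      · simp only [List.length_append, List.length_cons, List.length_nil]; omega

lemma concat_decomp {l : L} (h : l ≠ []) :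
    l = l.dropLast ++ [l.getLast h] := (List.dropLast_append_getLast h).symm

lemma adj_lipschitz (l : L) {u u' : LTVertex} (h : LTGraph.Adj u u') :
    D l u'.1 ≤ D l u.1 + 1 := by
  obtain ⟨hne, hp | hp | ⟨hlen, hdl⟩⟩ := h
  · obtain ⟨t, ht⟩ := hp.1
    have hlt : t.length = 1 := by
      have := congrArg List.length ht; simp at this; omega
    obtain ⟨x, rfl⟩ : ∃ x, t = [x] := by
      cases t with
      | nil => simp at hlt
      | cons z t' => simp at hlt; exact ⟨z, by simp [hlt]⟩
    rw [← ht]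
    exact (D_concat_le l x u.1).1
  · obtain ⟨t, ht⟩ := hp.1
    have hlt : t.length = 1 := by
      have := congrArg List.length ht; simp at this; omega
    obtain ⟨x, rfl⟩ : ∃ x, t = [x] := by
      cases t with
      | nil => simp at hlt
      | cons z t' => simp at hlt; exact ⟨z, by simp [hlt]⟩
    rw [← ht] at *
    exact (D_concat_le l x u'.1).2
  · have h1 : u.1 = u.1.dropLast ++ [u.1.getLast u.2.1] := concat_decomp u.2.1
    have h2 : u'.1 = u'.1.dropLast ++ [u'.1.getLast u'.2.1] := concat_decomp u'.2.1
    calc D l u'.1 = D l (u.1.dropLast ++ [u'.1.getLast u'.2.1]) := by rw [hdl, ← h2]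
    _ ≤ D l (u.1.dropLast ++ [u.1.getLast u.2.1]) + 1 := D_sib_le l _ _ _
    _ = D l u.1 + 1 := by rw [← h1]

lemma D_le_walk {v w : LTVertex} (p : LTGraph.Walk v w) : D v.1 w.1 ≤ p.length := by
  induction p with
  | nil => simp
  | @cons a b c h p ih =>
    have : D c.1 a.1 ≤ D c.1 b.1 + 1 := adj_lipschitz c.1 h.symm
    rw [D_comm]
    rw [D_comm] at ih
    simpa [Nat.add_comm] using Nat.add_le_add_right ih 1 |>.trans' (by omega)

lemma prefix_trichotomy (l : L) : ∀ m : L, l <+: m ∨ m <+: l ∨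
    ∃ u a s b t, a ≠ b ∧ l = u ++ a :: s ∧ m = u ++ b :: t := by
  induction l with
  | nil => intro m; left; exact List.nil_prefix
  | cons a s ih =>
    intro m
    cases m with
    | nil => right; left; exact List.nil_prefix
    | cons b t =>
      by_cases hab : a = b
      · subst hab
        rcases ih t with h | h | ⟨u, x, s', y, t', hxy, rfl, rfl⟩
        · left; exact List.cons_prefix_cons.2 ⟨rfl, h⟩
        · right; left; exact List.cons_prefix_cons.2 ⟨rfl, h⟩
        · right; right; exact ⟨a :: u, x, s', y, t', hxy, rfl, rfl⟩
      · right; right; exact ⟨[], a, s, b, t, hab, rfl, rfl⟩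

lemma valid_prefix {l m : L} (hm : m ≠ [] ∧ m.Chain' (· ≠ ·)) (h : l <+: m) (hl : l ≠ []) :
    l ≠ [] ∧ l.Chain' (· ≠ ·) := ⟨hl, hm.2.prefix h⟩

lemma descent (v w : LTVertex) (hne : v ≠ w) :
    ∃ u : LTVertex, LTGraph.Adj w u ∧ D v.1 u.1 + 1 = D v.1 w.1 := by
  rcases prefix_trichotomy v.1 w.1 with h | h | ⟨u₀, a, s, b, t, hab, hv, hw⟩
  · -- v.1 <+: w.1, strict
    obtain ⟨t, ht⟩ := h
    have htne : t ≠ [] := by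
      rintro rfl; exact hne (Subtype.ext (by simpa using ht))
    -- u := w.dropLast
    have hwd : w.1.dropLast = v.1 ++ t.dropLast := by
      rw [← ht]; exact List.dropLast_append_of_ne_nil htne
    have hdne : w.1.dropLast ≠ [] := by
      rw [hwd]; simp [v.2.1]
    refine ⟨⟨w.1.dropLast, hdne, w.2.2.prefix (List.dropLast_prefix _)⟩, ⟨?_, Or.inr (Or.inl ⟨List.dropLast_prefix _, ?_⟩)⟩, ?_⟩
    · intro hcon
      have := congrArg (fun u : LTVertex => u.1.length) hcon
      simp [List.length_dropLast] at this
      have : w.1.length ≠ 0 := by simp [w.2.1]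
      omega
    · have : w.1.length ≠ 0 := by simp [w.2.1]
      simp [List.length_dropLast]; omega
    · show D v.1 w.1.dropLast + 1 = D v.1 w.1
      rw [hwd, ← ht, D_prefix, D_prefix]
      have : t.length ≠ 0 := by simp [htne]
      simp [List.length_dropLast]; omega
  · -- w.1 <+: v.1, strict
    obtain ⟨t, ht⟩ := h
    have htne : t ≠ [] := by
      rintro rfl; exact hne (Subtype.ext (by simpa using ht.symm))
    obtain ⟨x, t', rfl⟩ : ∃ x t', t = x :: t' := by
      cases t with
      | nil => exact absurd rfl htne
      | cons x t' => exact ⟨x, t', rfl⟩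
    have hpre : w.1 ++ [x] <+: v.1 := ⟨t', by rw [← ht]; simp⟩
    refine ⟨⟨w.1 ++ [x], by simp, v.2.2.prefix hpre⟩, ⟨?_, Or.inl ⟨⟨[x], rfl⟩, by simp⟩⟩, ?_⟩
    · intro hcon
      have := congrArg (fun u : LTVertex => u.1.length) hcon
      simp at this
    · show D v.1 (w.1 ++ [x]) + 1 = D v.1 w.1
      rw [← ht]
      have h1 : D (w.1 ++ x :: t') (w.1 ++ [x]) = D (x :: t') [x] := D_append_left _ _ _
      have h2 : D (w.1 ++ x :: t') w.1 = D (x :: t') [] := by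
        have := D_append_left w.1 (x :: t') []
        simpa using this
      rw [h1, h2]
      simp
  · -- incomparable
    cases t with
    | cons y t' =>
      -- w = u₀ ++ b :: y :: t'; take dropLast
      have hwd : w.1.dropLast = u₀ ++ b :: (y :: t').dropLast := by
        rw [hw]
        rw [show u₀ ++ b :: y :: t' = u₀ ++ (b :: y :: t') from rfl,
          List.dropLast_append_of_ne_nil (by simp)]
        rfl
      refine ⟨⟨w.1.dropLast, by rw [hwd]; simp, w.2.2.prefix (List.dropLast_prefix _)⟩,
        ⟨?_, Or.inr (Or.inl ⟨List.dropLast_prefix _, ?_⟩)⟩, ?_⟩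
      · intro hcon
        have := congrArg (fun u : LTVertex => u.1.length) hcon
        simp [List.length_dropLast, hw] at this
      · have : w.1.length ≠ 0 := by simp [w.2.1]
        simp [List.length_dropLast]; omega
      · show D v.1 w.1.dropLast + 1 = D v.1 w.1
        rw [hwd, hv, hw, D_append_left, D_append_left, D_cons_cons, D_cons_cons,
          if_neg hab, if_neg hab]
        simp; omega
    | nil =>
      -- w = u₀ ++ [b]; take sibling u₀ ++ [a]
      have hpre : u₀ ++ [a] <+: v.1 := ⟨s, by rw [hv]; simp⟩
      refine ⟨⟨u₀ ++ [a], by simp, v.2.2.prefix hpre⟩,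
        ⟨?_, Or.inr (Or.inr ⟨by simp [hw], by simp [hw]⟩)⟩, ?_⟩
      · intro hcon
        have h' : u₀ ++ [b] = u₀ ++ [a] := by
          rw [← hw]; exact congrArg Subtype.val hcon
        have hba : b = a := by simpa using List.append_cancel_left h'
        exact hab hba.symm
      · show D v.1 (u₀ ++ [a]) + 1 = D v.1 w.1
        rw [hv, hw, D_append_left, D_append_left, D_cons_cons, D_cons_cons,
          if_pos rfl, if_neg hab]
        simp

lemma exists_walk (v w : LTVertex) : ∃ p : LTGraph.Walk v w, p.length = D v.1 w.1 := by
  obtain ⟨n, hn⟩ : ∃ n, D v.1 w.1 = n := ⟨_, rfl⟩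
  induction n generalizing w with
  | zero =>
    obtain rfl : v = w := Subtype.ext (D_eq_zero_iff.1 hn)
    exact ⟨SimpleGraph.Walk.nil, by simp [hn]⟩
  | succ n ih =>
    have hne : v ≠ w := by
      rintro rfl; simp at hn
    obtain ⟨u, hadj, hd⟩ := descent v w hne
    have hu : D v.1 u.1 = n := by omega
    obtain ⟨p, hp⟩ := ih u hu
    exact ⟨p.concat hadj.symm, by simp [SimpleGraph.Walk.length_concat, hp, hn, hu]⟩

theorem dist_eq (v w : LTVertex) : LTGraph.dist v w = D v.1 w.1 := by
  obtain ⟨p, hp⟩ := exists_walk v w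
  refine le_antisymm (hp ▸ SimpleGraph.dist_le p) ?_
  obtain ⟨q, hq⟩ := SimpleGraph.Reachable.exists_walk_length_eq_dist ⟨p⟩
  exact hq ▸ D_le_walk q

end LT
namespace LT

instance : DecidableEq LTVertex := fun v w =>
  decidable_of_iff (v.1 = w.1) Subtype.ext_iff.symm

def thd (a b : Fin 3) : Fin 3 := -a - b

lemma thd_ne {a b : Fin 3} (h : a ≠ b) : thd a b ≠ a ∧ thd a b ≠ b := by
  revert h; revert a b; decide

lemma eq_thd {a b z : Fin 3} (h : a ≠ b) (h1 : z ≠ a) (h2 : z ≠ b) : z = thd a b := by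
  revert h h1 h2; revert a b z; decide

lemma fin3_cases {y z : Fin 3} (h : z ≠ y) : z = y + 1 ∨ z = y + 2 := by
  revert h; revert y z; decide

lemma fin3_facts (y : Fin 3) : y + 1 ≠ y ∧ y + 2 ≠ y ∧ y + 1 ≠ y + 2 := by
  revert y; decide

lemma valid_concat (r : L) (y z : Fin 3) :
    ((r ++ [y]) ++ [z]).Chain' (· ≠ ·) ↔ (r ++ [y]).Chain' (· ≠ ·) ∧ y ≠ z := by
  simp only [List.Chain']
  rw [List.isChain_append]
  simp [List.getLast?_concat]

lemma valid_concat' (r : L) (z : Fin 3) (hr : r ≠ []) :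
    (r ++ [z]).Chain' (· ≠ ·) ↔ r.Chain' (· ≠ ·) ∧ r.getLast hr ≠ z := by
  simp only [List.Chain']
  rw [List.isChain_append]
  simp [List.getLast?_eq_getLast hr]

lemma adj_of_concat {w u : LTVertex} {z : Fin 3} (h : u.1 = w.1 ++ [z]) :
    LTGraph.Adj w u := by
  refine ⟨fun hc => ?_, Or.inl ⟨⟨[z], h.symm⟩, by simp [h]⟩⟩
  have := congrArg (fun u : LTVertex => u.1.length) hc
  simp [h] at this

lemma adj_of_parent {w u : LTVertex} (h : u.1 = w.1.dropLast) :
    LTGraph.Adj w u := by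
  have hw : w.1.length ≠ 0 := by simp [w.2.1]
  refine ⟨fun hc => ?_, Or.inr (Or.inl ⟨h ▸ List.dropLast_prefix w.1, ?_⟩)⟩
  · have := congrArg (fun u : LTVertex => u.1.length) hc
    simp [h, List.length_dropLast] at this
    omega
  · simp [h, List.length_dropLast]; omega

lemma adj_of_sib {w u : LTVertex} (hd : u.1.dropLast = w.1.dropLast)
    (hlen : u.1.length = w.1.length) (hne : u ≠ w) : LTGraph.Adj w u :=
  ⟨hne.symm, Or.inr (Or.inr ⟨hlen.symm, hd.symm⟩)⟩

lemma adj_cases {w u : LTVertex} {r : L} {y : Fin 3} (hw : w.1 = r ++ [y])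
    (h : LTGraph.Adj w u) :
    (∃ z, z ≠ y ∧ u.1 = w.1 ++ [z]) ∨ (u.1 = r ∧ r ≠ []) ∨
    (∃ z, z ≠ y ∧ u.1 = r ++ [z]) := by
  obtain ⟨hne, hp | hp | ⟨hlen, hdl⟩⟩ := h
  · obtain ⟨t, ht⟩ := hp.1
    have hlt : t.length = 1 := by
      have := congrArg List.length ht; simp [hp.2] at this ⊢; omega
    obtain ⟨z, rfl⟩ : ∃ z, t = [z] := by
      cases t with
      | nil => simp at hlt
      | cons z t' => simp at hlt; exact ⟨z, by simp [hlt]⟩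
    left
    refine ⟨z, ?_, ht.symm⟩
    have hvalid := u.2.2
    rw [← ht, hw] at hvalid
    exact Ne.symm ((valid_concat r y z).1 hvalid).2
  · obtain ⟨t, ht⟩ := hp.1
    have hlt : t.length = 1 := by
      have := congrArg List.length ht; simp [hp.2] at this ⊢; omega
    obtain ⟨z, rfl⟩ : ∃ z, t = [z] := by
      cases t with
      | nil => simp at hlt
      | cons z t' => simp at hlt; exact ⟨z, by simp [hlt]⟩
    right; left
    have : u.1 = w.1.dropLast := by rw [← ht]; simp
    rw [hw] at this
    simp at this
    refine ⟨this, ?_⟩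
    rintro rfl
    exact u.2.1 this
  · right; right
    have hu : u.1 = u.1.dropLast ++ [u.1.getLast u.2.1] := concat_decomp u.2.1
    have hrd : w.1.dropLast = r := by rw [hw]; simp
    have h2 : u.1.dropLast = r := by rw [← hdl]; exact hrd
    refine ⟨u.1.getLast u.2.1, fun hzy => ?_, by rw [← h2]; exact hu⟩
    apply hne
    apply Subtype.ext
    rw [hw, hu, h2, hzy]

lemma image_nbr_single (w : LTVertex) (y : Fin 3) (hw : w.1 = [y]) :
    (fun u : LTVertex => u.1) '' (LTGraph.neighborSet w) =
      {[y + 1], [y + 2], [y, y + 1], [y, y + 2]} := by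
  have hval : ∀ z : Fin 3, z ≠ y → ([y, z] : L).Chain' (· ≠ ·) := by
    intro z hz; simp [List.Chain', Ne.symm hz]
  ext l
  simp only [Set.mem_image, SimpleGraph.mem_neighborSet]
  constructor
  · rintro ⟨u, hadj, rfl⟩
    rcases adj_cases (r := []) (by simpa using hw) hadj with ⟨z, hz, h⟩ | ⟨h, hne⟩ | ⟨z, hz, h⟩
    · rw [h, hw]
      rcases fin3_cases hz with rfl | rfl
      · simp
      · simp
    · exact absurd rfl hne
    · rw [h]
      rcases fin3_cases hz with rfl | rfl
      · simp
      · simp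
  · intro hl
    simp only [Set.mem_insert_iff, Set.mem_singleton_iff] at hl
    obtain ⟨f1, f2, f3⟩ := fin3_facts y
    rcases hl with rfl | rfl | rfl | rfl
    · refine ⟨⟨[y + 1], by simp, by simp [List.Chain']⟩,
        adj_of_sib (by simp [hw]) (by simp [hw]) (fun hc => ?_), rfl⟩
      have := congrArg Subtype.val hc
      rw [hw] at this
      simp at this
    · refine ⟨⟨[y + 2], by simp, by simp [List.Chain']⟩,
        adj_of_sib (by simp [hw]) (by simp [hw]) (fun hc => ?_), rfl⟩
      have := congrArg Subtype.val hc
      rw [hw] at this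
      simp at this
    · exact ⟨⟨[y, y + 1], by simp, hval _ f1⟩, adj_of_concat (z := y + 1) (by simp [hw]), rfl⟩
    · exact ⟨⟨[y, y + 2], by simp, hval _ f2⟩, adj_of_concat (z := y + 2) (by simp [hw]), rfl⟩

lemma image_nbr_big (w : LTVertex) (r : L) (y : Fin 3) (hr : r ≠ [])
    (hw : w.1 = r ++ [y]) :
    (fun u : LTVertex => u.1) '' (LTGraph.neighborSet w) =
      {r, r ++ [thd y (r.getLast hr)], (r ++ [y]) ++ [y + 1], (r ++ [y]) ++ [y + 2]} := by
  set c := r.getLast hr with hc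
  have hrchain : r.Chain' (· ≠ ·) := w.2.2.prefix (hw ▸ ⟨[y], rfl⟩)
  have hcy : c ≠ y := by
    have := w.2.2
    rw [hw, valid_concat' r y hr] at this
    exact this.2
  have hthd := thd_ne (Ne.symm hcy)
  ext l
  simp only [Set.mem_image, SimpleGraph.mem_neighborSet]
  constructor
  · rintro ⟨u, hadj, rfl⟩
    rcases adj_cases hw hadj with ⟨z, hz, h⟩ | ⟨h, -⟩ | ⟨z, hz, h⟩
    · rw [h, hw]
      rcases fin3_cases hz with rfl | rfl
      · simp
      · simp
    · rw [h]; simp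
    · have hzc : z ≠ c := by
        have := u.2.2
        rw [h, valid_concat' r z hr] at this
        exact Ne.symm this.2
      have : z = thd y c := eq_thd (Ne.symm hcy) hz hzc
      rw [h, this]
      simp
  · intro hl
    simp only [Set.mem_insert_iff, Set.mem_singleton_iff] at hl
    obtain ⟨f1, f2, f3⟩ := fin3_facts y
    rcases hl with h | h | h | h
    · exact ⟨⟨r, hr, hrchain⟩, adj_of_parent (by rw [hw]; simp), h.symm⟩
    · refine ⟨⟨r ++ [thd y c], by simp, (valid_concat' r _ hr).2 ⟨hrchain, Ne.symm hthd.2⟩⟩,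
        adj_of_sib (by simp [hw]) (by simp [hw]) (fun hcon => ?_), h.symm⟩
      have := congrArg Subtype.val hcon
      rw [hw] at this
      exact hthd.1 (by simpa using this)
    · exact ⟨⟨(r ++ [y]) ++ [y + 1], by simp, (valid_concat r y _).2 ⟨hw ▸ w.2.2, Ne.symm f1⟩⟩,
        adj_of_concat (z := y + 1) (by simp [hw]), h.symm⟩
    · exact ⟨⟨(r ++ [y]) ++ [y + 2], by simp, (valid_concat r y _).2 ⟨hw ▸ w.2.2, Ne.symm f2⟩⟩,
        adj_of_concat (z := y + 2) (by simp [hw]), h.symm⟩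

lemma deg4 (v : LTVertex) : (LTGraph.neighborSet v).ncard = 4 := by
  rw [← Set.ncard_image_of_injective (f := fun u : LTVertex => u.1) _ Subtype.val_injective]
  rcases List.eq_nil_or_concat v.1 with h | ⟨r, y, hv⟩
  · exact absurd h v.2.1
  rw [List.concat_eq_append] at hv
  rcases eq_or_ne r [] with rfl | hr
  · rw [image_nbr_single v y (by simpa using hv)]
    obtain ⟨f1, f2, f3⟩ := fin3_facts y
    rw [Set.ncard_insert_of_notMem (by simp [f3]), Set.ncard_insert_of_notMem (by simp),
      Set.ncard_insert_of_notMem (by simp), Set.ncard_singleton]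
  · rw [image_nbr_big v r y hr hv]
    have hlr : r.length ≠ 0 := by simp [hr]
    obtain ⟨f1, f2, f3⟩ := fin3_facts y
    rw [Set.ncard_insert_of_notMem (by
        simp only [Set.mem_insert_iff, Set.mem_singleton_iff]
        push_neg
        refine ⟨?_, ?_, ?_⟩ <;> intro hcon <;>
          have := congrArg List.length hcon <;> simp at this),
      Set.ncard_insert_of_notMem (by
        simp only [Set.mem_insert_iff, Set.mem_singleton_iff]
        push_neg
        constructor <;> intro hcon <;>
          have := congrArg List.length hcon <;> simp at this <;> omega),
      Set.ncard_pair (by simp [f3])]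

end LT
namespace LT

section counts
variable {a b c d : L} {P : L → Prop}

lemma count_pair_34 (ha : ¬ P a) (hb : ¬ P b) (hc : P c) (hd : P d) (hcd : c ≠ d) :
    (({a, b, c, d} : Set L) ∩ {l | P l}).ncard = 2 := by
  have hs : ({a, b, c, d} : Set L) ∩ {l | P l} = {c, d} := by
    ext l
    simp only [Set.mem_inter_iff, Set.mem_insert_iff, Set.mem_singleton_iff, Set.mem_setOf_eq]
    constructor
    · rintro ⟨rfl | rfl | rfl | rfl, h⟩ <;> tauto
    · rintro (rfl | rfl) <;> tauto
  rw [hs, Set.ncard_pair hcd]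

lemma count_pair_12 (ha : P a) (hb : P b) (hc : ¬ P c) (hd : ¬ P d) (hab : a ≠ b) :
    (({a, b, c, d} : Set L) ∩ {l | P l}).ncard = 2 := by
  have hs : ({a, b, c, d} : Set L) ∩ {l | P l} = {a, b} := by
    ext l
    simp only [Set.mem_inter_iff, Set.mem_insert_iff, Set.mem_singleton_iff, Set.mem_setOf_eq]
    constructor
    · rintro ⟨rfl | rfl | rfl | rfl, h⟩ <;> tauto
    · rintro (rfl | rfl) <;> tauto
  rw [hs, Set.ncard_pair hab]

lemma count_one_1 (ha : P a) (hb : ¬ P b) (hc : ¬ P c) (hd : ¬ P d) :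
    (({a, b, c, d} : Set L) ∩ {l | P l}).ncard = 1 := by
  have hs : ({a, b, c, d} : Set L) ∩ {l | P l} = {a} := by
    ext l
    simp only [Set.mem_inter_iff, Set.mem_insert_iff, Set.mem_singleton_iff, Set.mem_setOf_eq]
    constructor
    · rintro ⟨rfl | rfl | rfl | rfl, h⟩ <;> tauto
    · rintro rfl; tauto
  rw [hs, Set.ncard_singleton]

lemma count_one_2 (ha : ¬ P a) (hb : P b) (hc : ¬ P c) (hd : ¬ P d) :
    (({a, b, c, d} : Set L) ∩ {l | P l}).ncard = 1 := by
  have hs : ({a, b, c, d} : Set L) ∩ {l | P l} = {b} := by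
    ext l
    simp only [Set.mem_inter_iff, Set.mem_insert_iff, Set.mem_singleton_iff, Set.mem_setOf_eq]
    constructor
    · rintro ⟨rfl | rfl | rfl | rfl, h⟩ <;> tauto
    · rintro rfl; tauto
  rw [hs, Set.ncard_singleton]

lemma count_one_3 (ha : ¬ P a) (hb : ¬ P b) (hc : P c) (hd : ¬ P d) :
    (({a, b, c, d} : Set L) ∩ {l | P l}).ncard = 1 := by
  have hs : ({a, b, c, d} : Set L) ∩ {l | P l} = {c} := by
    ext l
    simp only [Set.mem_inter_iff, Set.mem_insert_iff, Set.mem_singleton_iff, Set.mem_setOf_eq]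
    constructor
    · rintro ⟨rfl | rfl | rfl | rfl, h⟩ <;> tauto
    · rintro rfl; tauto
  rw [hs, Set.ncard_singleton]

lemma count_one_4 (ha : ¬ P a) (hb : ¬ P b) (hc : ¬ P c) (hd : P d) :
    (({a, b, c, d} : Set L) ∩ {l | P l}).ncard = 1 := by
  have hs : ({a, b, c, d} : Set L) ∩ {l | P l} = {d} := by
    ext l
    simp only [Set.mem_inter_iff, Set.mem_insert_iff, Set.mem_singleton_iff, Set.mem_setOf_eq]
    constructor
    · rintro ⟨rfl | rfl | rfl | rfl, h⟩ <;> tauto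
    · rintro rfl; tauto
  rw [hs, Set.ncard_singleton]

end counts

lemma chain'_middle {l m : L} {x : Fin 3} (hl : l ≠ []) (h : (l ++ x :: m).Chain' (· ≠ ·)) :
    l.getLast hl ≠ x := by
  simp only [List.Chain'] at h
  rw [List.isChain_append] at h
  exact h.2.2 _ (by simp [List.getLast?_eq_getLast hl]) _ rfl

lemma bc (v w : LTVertex) (i : ℕ) (hi : 1 ≤ i) (hD : D v.1 w.1 = i) :
    (LTGraph.neighborSet w ∩ {u : LTVertex | D v.1 u.1 = i + 1}).ncard = 2 ∧
    (LTGraph.neighborSet w ∩ {u : LTVertex | D v.1 u.1 = i - 1}).ncard = 1 := by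
  have key : ∀ k : ℕ, (LTGraph.neighborSet w ∩ {u : LTVertex | D v.1 u.1 = k}).ncard
      = (((fun u : LTVertex => u.1) '' LTGraph.neighborSet w) ∩ {l : L | D v.1 l = k}).ncard := by
    intro k
    have h1 : (LTGraph.neighborSet w ∩ {u : LTVertex | D v.1 u.1 = k})
        = LTGraph.neighborSet w ∩ ((fun u : LTVertex => u.1) ⁻¹' {l : L | D v.1 l = k}) := rfl
    rw [h1, ← Set.ncard_image_of_injective (f := fun u : LTVertex => u.1) _ Subtype.val_injective,
      Set.image_inter_preimage]
  rw [key, key]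
  rcases prefix_trichotomy v.1 w.1 with h | h | ⟨u₀, aa, s, b, t, hab, hv, hw⟩
  · -- v strict prefix of w
    obtain ⟨t, ht⟩ := h
    have htne : t ≠ [] := by
      rintro rfl
      rw [← ht] at hD
      simp [D_prefix] at hD
      omega
    have hlt : t.length = i := by
      rw [← ht, D_prefix] at hD; exact hD
    obtain ⟨r, y, hw'⟩ : ∃ r y, w.1 = r ++ [y] := ⟨_, _, concat_decomp w.2.1⟩
    have hrd : r = v.1 ++ t.dropLast := by
      have : r = w.1.dropLast := by rw [hw']; simp
      rw [this, ← ht, List.dropLast_append_of_ne_nil htne]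
    have hr : r ≠ [] := by rw [hrd]; simp [v.2.1]
    have htd : t.dropLast.length = i - 1 := by
      have : t.length ≠ 0 := by simp [htne]
      simp [List.length_dropLast]; omega
    have e1 : D v.1 r = i - 1 := by rw [hrd, D_prefix, htd]
    have e2 : ∀ z : Fin 3, D v.1 (r ++ [z]) = i := by
      intro z
      rw [hrd, List.append_assoc, D_prefix]
      have : t.length ≠ 0 := by simp [htne]
      simp [List.length_dropLast]; omega
    have e3 : ∀ z : Fin 3, D v.1 ((r ++ [y]) ++ [z]) = i + 1 := by
      intro z
      rw [← hw', ← ht, List.append_assoc, D_prefix]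
      simp [hlt]
    rw [image_nbr_big w r y hr hw']
    constructor
    · exact count_pair_34 (by rw [e1]; omega) (by rw [e2]; omega) (e3 _) (e3 _)
        (by simp [(fin3_facts y).2.2])
    · exact count_one_1 e1 (by rw [e2]; omega) (by rw [e3]; omega) (by rw [e3]; omega)
  · -- w strict prefix of v
    obtain ⟨t, ht⟩ := h
    have htne : t ≠ [] := by
      rintro rfl
      rw [← ht] at hD
      simp [D_comm, D_prefix] at hD
      omega
    obtain ⟨x, s', rfl⟩ : ∃ x s', t = x :: s' := by
      cases t with
      | nil => exact absurd rfl htne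
      | cons x s' => exact ⟨x, s', rfl⟩
    have hlt : s'.length + 1 = i := by
      rw [← ht, D_comm, D_prefix] at hD; simpa using hD
    obtain ⟨r, y, hw'⟩ : ∃ r y, w.1 = r ++ [y] := ⟨_, _, concat_decomp w.2.1⟩
    have hyx : y ≠ x := by
      have hval := v.2.2
      rw [← ht, hw'] at hval
      have := chain'_middle (l := r ++ [y]) (by simp) hval
      rwa [List.getLast_concat] at this
    have echild : ∀ z : Fin 3, D v.1 ((r ++ [y]) ++ [z])
        = if x = z then s'.length else s'.length + 1 := by
      intro z
      rw [← hw', ← ht, D_append_left, D_cons_cons]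
      split <;> simp
    rcases eq_or_ne r [] with rfl | hr
    · -- w = [y]
      have hw1 : w.1 = [y] := by simpa using hw'
      have hv1 : v.1 = y :: x :: s' := by rw [← ht, hw1]; rfl
      have esib : ∀ z : Fin 3, z ≠ y → D v.1 [z] = i + 1 := by
        intro z hz
        rw [hv1, D_cons_cons, if_neg (Ne.symm hz)]
        simp; omega
      obtain ⟨f1, f2, f3⟩ := fin3_facts y
      rw [image_nbr_single w y hw1]
      have e3 : D v.1 [y, y + 1] = if x = y + 1 then s'.length else s'.length + 1 := by
        have := echild (y + 1); simpa using this
      have e4 : D v.1 [y, y + 2] = if x = y + 2 then s'.length else s'.length + 1 := by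
        have := echild (y + 2); simpa using this
      rcases fin3_cases (Ne.symm hyx) with hx | hx
      · rw [hx] at e3 e4
        rw [if_pos rfl] at e3
        rw [if_neg f3] at e4
        refine ⟨count_pair_12 (esib _ f1) (esib _ f2) (by rw [e3]; omega) (by rw [e4]; omega)
          (by simp [f3]), ?_⟩
        exact count_one_3 (by rw [esib _ f1]; omega) (by rw [esib _ f2]; omega)
          (by rw [e3]; omega) (by rw [e4]; omega)
      · rw [hx] at e3 e4
        rw [if_neg (Ne.symm f3)] at e3
        rw [if_pos rfl] at e4
        refine ⟨count_pair_12 (esib _ f1) (esib _ f2) (by rw [e3]; omega) (by rw [e4]; omega)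
          (by simp [f3]), ?_⟩
        exact count_one_4 (by rw [esib _ f1]; omega) (by rw [esib _ f2]; omega)
          (by rw [e3]; omega) (by rw [e4]; omega)
    · -- |w| ≥ 2
      have hv1 : v.1 = r ++ (y :: x :: s') := by
        rw [← ht, hw', List.append_assoc]; rfl
      have e1 : D v.1 r = i + 1 := by
        have : D v.1 (r ++ []) = D (y :: x :: s') [] := by rw [hv1, D_append_left]
        simp at this
        rw [this]; simp; omega
      have e2 : D v.1 (r ++ [thd y (r.getLast hr)]) = i + 1 := by
        rw [hv1, D_append_left, D_cons_cons,
          if_neg (Ne.symm (thd_ne (Ne.symm ((valid_concat' r y hr).1 (hw' ▸ w.2.2)).2)).1)]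
        simp; omega
      obtain ⟨f1, f2, f3⟩ := fin3_facts y
      have e3 := echild (y + 1)
      have e4 := echild (y + 2)
      rw [image_nbr_big w r y hr hw']
      rcases fin3_cases (Ne.symm hyx) with hx | hx
      · rw [hx] at e3 e4
        rw [if_pos rfl] at e3
        rw [if_neg f3] at e4
        refine ⟨count_pair_12 e1 e2 (by rw [e3]; omega) (by rw [e4]; omega) ?_, ?_⟩
        · intro hc
          have := congrArg List.length hc
          simp at this
        · exact count_one_3 (by rw [e1]; omega) (by rw [e2]; omega)
            (by rw [e3]; omega) (by rw [e4]; omega)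
      · rw [hx] at e3 e4
        rw [if_neg (Ne.symm f3)] at e3
        rw [if_pos rfl] at e4
        refine ⟨count_pair_12 e1 e2 (by rw [e3]; omega) (by rw [e4]; omega) ?_, ?_⟩
        · intro hc
          have := congrArg List.length hc
          simp at this
        · exact count_one_4 (by rw [e1]; omega) (by rw [e2]; omega)
            (by rw [e3]; omega) (by rw [e4]; omega)
  · -- incomparable
    rw [hv, hw, D_append_left, D_cons_cons, if_neg hab] at hD
    cases t with
    | cons y' t' =>
      have hD' : s.length + t'.length + 2 = i := by simp at hD; omega
      obtain ⟨r, y, hw'⟩ : ∃ r y, w.1 = r ++ [y] := ⟨_, _, concat_decomp w.2.1⟩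
      have hrd : r = u₀ ++ b :: (y' :: t').dropLast := by
        have : r = w.1.dropLast := by rw [hw']; simp
        rw [this, hw]
        rw [show u₀ ++ b :: y' :: t' = u₀ ++ (b :: y' :: t') from rfl,
          List.dropLast_append_of_ne_nil (by simp)]
        rfl
      have hr : r ≠ [] := by rw [hrd]; simp
      have e1 : D v.1 r = i - 1 := by
        rw [hv, hrd, D_append_left, D_cons_cons, if_neg hab]
        simp; omega
      have e2 : ∀ z : Fin 3, D v.1 (r ++ [z]) = i := by
        intro z
        rw [hv, hrd, List.append_assoc]
        rw [show (b :: (y' :: t').dropLast) ++ [z]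
          = b :: ((y' :: t').dropLast ++ [z]) from rfl]
        rw [D_append_left, D_cons_cons, if_neg hab]
        simp; omega
      have e3 : ∀ z : Fin 3, D v.1 ((r ++ [y]) ++ [z]) = i + 1 := by
        intro z
        rw [← hw', hv, hw, List.append_assoc]
        rw [show (b :: y' :: t') ++ [z] = b :: (y' :: t' ++ [z]) from rfl]
        rw [D_append_left, D_cons_cons, if_neg hab]
        simp; omega
      rw [image_nbr_big w r y hr hw']
      refine ⟨count_pair_34 (by rw [e1]; omega) (by rw [e2]; omega) (e3 _) (e3 _)
        (by simp [(fin3_facts y).2.2]), ?_⟩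
      exact count_one_1 e1 (by rw [e2]; omega) (by rw [e3]; omega) (by rw [e3]; omega)
    | nil =>
      have hD' : s.length + 1 = i := by simpa using hD
      have echild : ∀ z : Fin 3, D v.1 ((u₀ ++ [b]) ++ [z]) = i + 1 := by
        intro z
        rw [hv, List.append_assoc]
        rw [show ([b] : L) ++ [z] = b :: [z] from rfl]
        rw [D_append_left, D_cons_cons, if_neg hab]
        simp; omega
      rcases eq_or_ne u₀ [] with rfl | hu
      · -- w = [b]
        have hw1 : w.1 = [b] := by simpa using hw
        have hv1 : v.1 = aa :: s := by simpa using hv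
        obtain ⟨f1, f2, f3⟩ := fin3_facts b
        have esib : ∀ z : Fin 3, D v.1 [z] = if aa = z then s.length else s.length + 1 := by
          intro z
          rw [hv1, D_cons_cons]
          split <;> simp
        have e3 : ∀ z : Fin 3, D v.1 [b, z] = i + 1 := by
          intro z
          have := echild z
          simpa using this
        rw [image_nbr_single w b hw1]
        rcases fin3_cases hab with hx | hx
        · subst hx
          have ea := esib (b + 1)
          have eb := esib (b + 2)
          rw [if_pos rfl] at ea
          rw [if_neg f3] at eb
          refine ⟨count_pair_34 (by rw [ea]; omega) (by rw [eb]; omega) (e3 _) (e3 _)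
            (by simp [f3]), ?_⟩
          exact count_one_1 (by rw [ea]; omega) (by rw [eb]; omega)
            (by rw [e3]; omega) (by rw [e3]; omega)
        · subst hx
          have ea := esib (b + 1)
          have eb := esib (b + 2)
          rw [if_neg (Ne.symm f3)] at ea
          rw [if_pos rfl] at eb
          refine ⟨count_pair_34 (by rw [ea]; omega) (by rw [eb]; omega) (e3 _) (e3 _)
            (by simp [f3]), ?_⟩
          exact count_one_2 (by rw [ea]; omega) (by rw [eb]; omega)
            (by rw [e3]; omega) (by rw [e3]; omega)
      · -- w = u₀ ++ [b], u₀ ≠ []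
        have e1 : D v.1 u₀ = i := by
          have : D v.1 (u₀ ++ []) = D (aa :: s) [] := by rw [hv, D_append_left]
          simp at this
          rw [this]; omega
        have hau : u₀.getLast hu ≠ aa := chain'_middle hu (hv ▸ v.2.2)
        have hbu : u₀.getLast hu ≠ b := chain'_middle hu (hw ▸ w.2.2)
        have hthd : aa = thd b (u₀.getLast hu) := eq_thd (Ne.symm hbu) hab (Ne.symm hau)
        have hru : w.1.dropLast = u₀ := by rw [hw]; simp
        have hgl : (u₀ : L).getLast hu = ((u₀ : L)).getLast hu := rfl
        have e2 : D v.1 (u₀ ++ [thd b (u₀.getLast hu)]) = i - 1 := by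
          rw [← hthd, hv, D_append_left, D_cons_cons, if_pos rfl]
          simp; omega
        rw [image_nbr_big w u₀ b hu hw]
        refine ⟨count_pair_34 (by rw [e1]; omega) (by rw [e2]; omega)
          (echild _) (echild _) (by simp [(fin3_facts b).2.2]), ?_⟩
        exact count_one_2 (by rw [e1]; omega) e2 (by rw [echild]; omega) (by rw [echild]; omega)

end LT
namespace LT

lemma length_le_D (l m : L) : m.length ≤ l.length + D l m := by
  induction l generalizing m with
  | nil => simp
  | cons a s ih =>
    cases m with
    | nil => simp
    | cons b t =>
      have := ih t
      simp only [D_cons_cons, List.length_cons]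
      split <;> omega

lemma sphere_finite (v : LTVertex) (i : ℕ) : {w : LTVertex | D v.1 w.1 = i}.Finite := by
  have h1 : {w : LTVertex | D v.1 w.1 = i} ⊆
      (fun u : LTVertex => u.1) ⁻¹' {l : L | l.length ≤ v.1.length + i} := by
    intro w hw
    simp only [Set.mem_setOf_eq] at hw
    have := length_le_D v.1 w.1
    simp only [Set.mem_preimage, Set.mem_setOf_eq]
    omega
  exact (Set.Finite.preimage (Set.injOn_of_injective Subtype.val_injective)
    (List.finite_length_le (Fin 3) (v.1.length + i))).subset h1

lemma sphere_eq_nbr (v : LTVertex) :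
    {w : LTVertex | D v.1 w.1 = 1} = LTGraph.neighborSet v := by
  ext u
  rw [Set.mem_setOf_eq, SimpleGraph.mem_neighborSet, ← SimpleGraph.dist_eq_one_iff_adj, dist_eq]

lemma nbr_finite (w : LTVertex) : (LTGraph.neighborSet w).Finite :=
  (sphere_eq_nbr w) ▸ sphere_finite w 1

lemma sphere_card (v : LTVertex) (i : ℕ) (hi : 1 ≤ i) :
    {w : LTVertex | D v.1 w.1 = i}.ncard = 2 ^ (i + 1) := by
  induction i with
  | zero => omega
  | succ n ih =>
    rcases Nat.lt_or_ge n 1 with hn | hn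
    · obtain rfl : n = 0 := by omega
      rw [sphere_eq_nbr, deg4]
      norm_num
    · have hS := ih hn
      classical
      set F := (sphere_finite v n).toFinset with hF
      set g : LTVertex → Finset LTVertex :=
        fun u => ((nbr_finite u).inter_of_left {w : LTVertex | D v.1 w.1 = n + 1}).toFinset
        with hg
      have hmemg : ∀ u w : LTVertex, w ∈ g u ↔ LTGraph.Adj u w ∧ D v.1 w.1 = n + 1 := by
        intro u w
        simp [hg, Set.Finite.mem_toFinset, SimpleGraph.mem_neighborSet]
      have hmemF : ∀ u : LTVertex, u ∈ F ↔ D v.1 u.1 = n := by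
        intro u; simp [hF, Set.Finite.mem_toFinset]
      have hcover : {w : LTVertex | D v.1 w.1 = n + 1} = ↑(F.biUnion g) := by
        ext w
        simp only [Set.mem_setOf_eq, Finset.coe_biUnion, Set.mem_iUnion, Finset.mem_coe,
          exists_prop]
        constructor
        · intro hw
          have hc := (bc v w (n + 1) (by omega) hw).2
          simp only [Nat.add_sub_cancel] at hc
          obtain ⟨u, hu⟩ := Set.ncard_eq_one.1 hc
          have humem : u ∈ LTGraph.neighborSet w ∩ {x : LTVertex | D v.1 x.1 = n} := by
            rw [hu]; rfl
          exact ⟨u, (hmemF u).2 humem.2, (hmemg u w).2 ⟨humem.1.symm, hw⟩⟩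
        · rintro ⟨u, -, hw⟩
          exact ((hmemg u w).1 hw).2
      have hdisj : ∀ u ∈ F, ∀ u' ∈ F, u ≠ u' → Disjoint (g u) (g u') := by
        intro u hu u' hu' hne
        rw [Finset.disjoint_left]
        intro w hw hw'
        obtain ⟨ha, hws⟩ := (hmemg u w).1 hw
        obtain ⟨ha', -⟩ := (hmemg u' w).1 hw'
        have hc := (bc v w (n + 1) (by omega) hws).2
        simp only [Nat.add_sub_cancel] at hc
        obtain ⟨x, hx⟩ := Set.ncard_eq_one.1 hc
        have h1 : u ∈ LTGraph.neighborSet w ∩ {z : LTVertex | D v.1 z.1 = n} :=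
          ⟨ha.symm, (hmemF u).1 hu⟩
        have h2 : u' ∈ LTGraph.neighborSet w ∩ {z : LTVertex | D v.1 z.1 = n} :=
          ⟨ha'.symm, (hmemF u').1 hu'⟩
        rw [hx] at h1 h2
        exact hne (h1.trans h2.symm)
      have hcard : ∀ u ∈ F, (g u).card = 2 := by
        intro u hu
        have hb := (bc v u n hn ((hmemF u).1 hu)).1
        rw [Set.ncard_eq_toFinset_card _ ((nbr_finite u).inter_of_left _)] at hb
        exact hb
      rw [hcover, Set.ncard_coe_finset, Finset.card_biUnion hdisj]
      rw [Finset.sum_congr rfl hcard, Finset.sum_const, smul_eq_mul]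
      have hFc : F.card = 2 ^ (n + 1) := by
        rw [hF, ← Set.ncard_eq_toFinset_card _ (sphere_finite v n)]
        exact hS
      rw [hFc, pow_succ]
      ring

end LT

/-- The linked-triangle graph is distance-regular with intersection array
`b₀ = 4`, `b_i = 2` and `c_i = 1` for `i ≥ 1`, and its spheres satisfy
`|Γ_i(v₀)| = 2^(i+1)` for `i ≥ 1`. -/
theorem linkedTriangle_distance_regular :
    (∀ v : LTVertex, (LTGraph.neighborSet v).ncard = 4) ∧
    (∀ (v w : LTVertex) (i : ℕ), 1 ≤ i → LTGraph.dist v w = i →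
      (LTGraph.neighborSet w ∩ {u : LTVertex | LTGraph.dist v u = i + 1}).ncard = 2 ∧
      (LTGraph.neighborSet w ∩ {u : LTVertex | LTGraph.dist v u = i - 1}).ncard = 1) ∧
    (∀ (v₀ : LTVertex) (i : ℕ), 1 ≤ i →
      {w : LTVertex | LTGraph.dist v₀ w = i}.ncard = 2 ^ (i + 1)) := by
  refine ⟨LT.deg4, ?_, ?_⟩
  · intro v w i hi hdist
    rw [LT.dist_eq] at hdist
    have hset : ∀ k : ℕ, {u : LTVertex | LTGraph.dist v u = k} = {u | LT.D v.1 u.1 = k} := by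
      intro k; ext u; simp [LT.dist_eq]
    rw [hset, hset]
    exact LT.bc v w i hi hdist
  · intro v₀ i hi
    have hset : {w : LTVertex | LTGraph.dist v₀ w = i} = {w | LT.D v₀.1 w.1 = i} := by
      ext w; simp [LT.dist_eq]
    rw [hset]
    exact LT.sphere_card v₀ i hi
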